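/- Suppose B ⊆ S_p^{Z_{2×2}} satisfies corner-extendable conditions C(1) and C(3) (or alternatively C(2) and C(4)). Then B is rectangle-extendable if and only if B is crisscross-extendable. -/

import Mathlib

open scoped Classical

/-- A `2×2` pattern over `p` symbols; first argument is the horizontal
coordinate, second the vertical coordinate. -/
abbrev Pat (p : ℕ) := Fin 2 → Fin 2 → Fin p

/-- The `2×2` block of the configuration `W` with lower-left corner `v`. -/
def blk {p : ℕ} (W : ℤ × ℤ → Fin p) (v : ℤ × ℤ) : Pat p :=
  fun a b => W (v.1 + (a : ℕ), v.2 + (b : ℕ))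

/-- The `2×2` square lattice `Z_{2×2}(v)` with lower-left corner `v`. -/
def sqr (v : ℤ × ℤ) : Set (ℤ × ℤ) :=
  {x | ∃ a b : Fin 2, x = (v.1 + (a : ℕ), v.2 + (b : ℕ))}

/-- `U` is a `B`-admissible pattern on the region `R`: every `2×2` block fully
contained in `R` carries a pattern of `B`. -/
def AdmOn {p : ℕ} (B : Set (Pat p)) (R : Set (ℤ × ℤ)) (U : ℤ × ℤ → Fin p) : Prop :=
  ∀ v : ℤ × ℤ, sqr v ⊆ R → blk U v ∈ B

/-- `W` is a global `B`-admissible configuration, i.e. `W ∈ Σ(B)`. -/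
def Glob {p : ℕ} (B : Set (Pat p)) (W : ℤ × ℤ → Fin p) : Prop :=
  ∀ v : ℤ × ℤ, blk W v ∈ B

/-- The crisscross lattice `Z₊`. -/
def Zplus : Set (ℤ × ℤ) :=
  sqr (0, 0) ∪ sqr (1, 0) ∪ sqr (-1, 0) ∪ sqr (0, 1) ∪ sqr (0, -1)

/-- The rectangular lattice `Z_{m×n}(v)`. -/
def rect (m n : ℕ) (v : ℤ × ℤ) : Set (ℤ × ℤ) :=
  {x | ∃ a b : ℕ, a < m ∧ b < n ∧ x = (v.1 + a, v.2 + b)}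

/-- Euclidean distance between two lattice points of `ℤ²`. -/
noncomputable def eDist (x y : ℤ × ℤ) : ℝ :=
  Real.sqrt (((x.1 - y.1 : ℤ) : ℝ) ^ 2 + ((x.2 - y.2 : ℤ) : ℝ) ^ 2)

/-- `B`-admissibility of the `2×n` horizontal strip whose left column is `c`
and right column is `d`. -/
def HAdm {p : ℕ} (B : Set (Pat p)) (n : ℕ) (c d : Fin n → Fin p) : Prop :=
  ∀ k k' : Fin n, (k' : ℕ) = (k : ℕ) + 1 →
    (fun a b : Fin 2 => (if a = 0 then c else d) (if b = 0 then k else k')) ∈ B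

/-- `B`-admissibility of the `n×2` vertical strip whose bottom row is `r` and
top row is `s`. -/
def VAdm {p : ℕ} (B : Set (Pat p)) (n : ℕ) (r s : Fin n → Fin p) : Prop :=
  ∀ k k' : Fin n, (k' : ℕ) = (k : ℕ) + 1 →
    (fun a b : Fin 2 => (if b = 0 then r else s) (if a = 0 then k else k')) ∈ B

/-- The horizontal transition matrix `H_n(B)`, indexed by columns of height
`n`. -/
noncomputable def Hmat {p : ℕ} (B : Set (Pat p)) (n : ℕ) :
    Matrix (Fin n → Fin p) (Fin n → Fin p) ℕ :=
  fun c d => if HAdm B n c d then 1 else 0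

/-- The vertical transition matrix `V_n(B)`, indexed by rows of width `n`. -/
noncomputable def Vmat {p : ℕ} (B : Set (Pat p)) (n : ℕ) :
    Matrix (Fin n → Fin p) (Fin n → Fin p) ℕ :=
  fun r s => if VAdm B n r s then 1 else 0

/-- A matrix has no zero row and no zero column. -/
def NonCompressible {ι : Type*} (A : Matrix ι ι ℕ) : Prop :=
  (∀ i, ∃ j, A i j ≠ 0) ∧ (∀ j, ∃ i, A i j ≠ 0)

/-- The saturated matrix `E(A)`. -/
noncomputable def Esat {ι : Type*} [Fintype ι] (A : Matrix ι ι ℕ) : Matrix ι ι ℕ :=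
  fun i j => if (∀ k, A i k = 0) ∨ (∀ k, A k j = 0) then 0 else 1

/-- `A` is primitive: some power of `A` (and all higher powers) dominates the
saturated matrix `E(A)` entrywise. -/
def Primitive {ι : Type*} [Fintype ι] [DecidableEq ι] (A : Matrix ι ι ℕ) : Prop :=
  ∃ n₀ : ℕ, 1 ≤ n₀ ∧ ∀ m, n₀ ≤ m → ∀ i j, Esat A i j ≤ (A ^ m) i j

/-- `B` is rectangle-extendable: every `B`-admissible pattern on an `m×n`
rectangle (`m, n ≥ 2`) extends to a global configuration in `Σ(B)`. -/
def RectExt {p : ℕ} (B : Set (Pat p)) : Prop :=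
  ∀ m n : ℕ, 2 ≤ m → 2 ≤ n → ∀ U : ℤ × ℤ → Fin p,
    AdmOn B (rect m n (0, 0)) U →
    ∃ W, Glob B W ∧ ∀ x ∈ rect m n (0, 0), W x = U x

/-- The four L-shaped lattices obtained from `Z_{3×3}` by removing one corner. -/
def Lshape : Fin 4 → Set (ℤ × ℤ)
  | 0 => rect 3 3 (0, 0) \ {((2 : ℤ), (2 : ℤ))}
  | 1 => rect 3 3 (0, 0) \ {((0 : ℤ), (2 : ℤ))}
  | 2 => rect 3 3 (0, 0) \ {((0 : ℤ), (0 : ℤ))}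
  | 3 => rect 3 3 (0, 0) \ {((2 : ℤ), (0 : ℤ))}

/-- The corner-extendable condition `C(i)` (here `i : Fin 4` stands for
`C(i+1)` of the paper): every `B`-admissible pattern on the L-shaped lattice
`L_{i+1}` extends to a `B`-admissible pattern on `Z_{3×3}`. -/
def CornerExt {p : ℕ} (B : Set (Pat p)) (i : Fin 4) : Prop :=
  ∀ U : ℤ × ℤ → Fin p, AdmOn B (Lshape i) U →
    ∃ U', AdmOn B (rect 3 3 (0, 0)) U' ∧ ∀ x ∈ Lshape i, U' x = U x

/-- `B` is crisscross-extendable: every `b ∈ B` extends to a `B`-admissible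
pattern on the crisscross lattice `Z₊`. -/
def CrissExt {p : ℕ} (B : Set (Pat p)) : Prop :=
  ∀ b ∈ B, ∃ U : ℤ × ℤ → Fin p, AdmOn B Zplus U ∧ blk U (0, 0) = b

section Basics

variable {p : ℕ}

lemma mem_rect {m n : ℕ} {v x : ℤ × ℤ} :
    x ∈ rect m n v ↔ v.1 ≤ x.1 ∧ x.1 < v.1 + m ∧ v.2 ≤ x.2 ∧ x.2 < v.2 + n := by
  constructor
  · rintro ⟨a, b, ha, hb, rfl⟩
    simp only
    omega
  · rintro ⟨h1, h2, h3, h4⟩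
    refine ⟨(x.1 - v.1).toNat, (x.2 - v.2).toNat, by omega, by omega, ?_⟩
    obtain ⟨x1, x2⟩ := x
    simp only [Prod.mk.injEq]
    constructor <;> omega

lemma sqr_eq_rect (v : ℤ × ℤ) : sqr v = rect 2 2 v := by
  ext x
  constructor
  · rintro ⟨a, b, rfl⟩
    exact ⟨a, b, a.isLt, b.isLt, rfl⟩
  · rintro ⟨a, b, ha, hb, rfl⟩
    exact ⟨⟨a, ha⟩, ⟨b, hb⟩, rfl⟩

lemma mem_sqr {v x : ℤ × ℤ} :
    x ∈ sqr v ↔ v.1 ≤ x.1 ∧ x.1 ≤ v.1 + 1 ∧ v.2 ≤ x.2 ∧ x.2 ≤ v.2 + 1 := by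
  rw [sqr_eq_rect, mem_rect]
  omega

lemma mem_Zplus {x : ℤ × ℤ} :
    x ∈ Zplus ↔ ((-1 ≤ x.1 ∧ x.1 ≤ 2 ∧ 0 ≤ x.2 ∧ x.2 ≤ 1) ∨
      (0 ≤ x.1 ∧ x.1 ≤ 1 ∧ -1 ≤ x.2 ∧ x.2 ≤ 2)) := by
  simp only [Zplus, Set.mem_union, mem_sqr]
  norm_num
  omega

lemma mem_Lshape0 {x : ℤ × ℤ} :
    x ∈ Lshape 0 ↔ (0 ≤ x.1 ∧ x.1 ≤ 2 ∧ 0 ≤ x.2 ∧ x.2 ≤ 2 ∧ ¬(x.1 = 2 ∧ x.2 = 2)) := by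
  show x ∈ rect 3 3 (0,0) \ _ ↔ _
  simp only [Set.mem_diff, mem_rect, Set.mem_singleton_iff, Prod.ext_iff]
  omega

lemma mem_Lshape1 {x : ℤ × ℤ} :
    x ∈ Lshape 1 ↔ (0 ≤ x.1 ∧ x.1 ≤ 2 ∧ 0 ≤ x.2 ∧ x.2 ≤ 2 ∧ ¬(x.1 = 0 ∧ x.2 = 2)) := by
  show x ∈ rect 3 3 (0,0) \ _ ↔ _
  simp only [Set.mem_diff, mem_rect, Set.mem_singleton_iff, Prod.ext_iff]
  omega

lemma mem_Lshape2 {x : ℤ × ℤ} :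
    x ∈ Lshape 2 ↔ (0 ≤ x.1 ∧ x.1 ≤ 2 ∧ 0 ≤ x.2 ∧ x.2 ≤ 2 ∧ ¬(x.1 = 0 ∧ x.2 = 0)) := by
  show x ∈ rect 3 3 (0,0) \ _ ↔ _
  simp only [Set.mem_diff, mem_rect, Set.mem_singleton_iff, Prod.ext_iff]
  omega

lemma mem_Lshape3 {x : ℤ × ℤ} :
    x ∈ Lshape 3 ↔ (0 ≤ x.1 ∧ x.1 ≤ 2 ∧ 0 ≤ x.2 ∧ x.2 ≤ 2 ∧ ¬(x.1 = 2 ∧ x.2 = 0)) := by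
  show x ∈ rect 3 3 (0,0) \ _ ↔ _
  simp only [Set.mem_diff, mem_rect, Set.mem_singleton_iff, Prod.ext_iff]
  omega

lemma blk_congr {U U' : ℤ × ℤ → Fin p} {v : ℤ × ℤ}
    (h : ∀ x ∈ sqr v, U x = U' x) : blk U v = blk U' v := by
  funext a b
  exact h _ ⟨a, b, rfl⟩

end Basics

section Transport

variable {p : ℕ}

/-- `B` admits extension of every admissible pattern from region `R` to `R'`. -/
def ExtendsTo (B : Set (Pat p)) (R R' : Set (ℤ × ℤ)) : Prop :=
  ∀ U : ℤ × ℤ → Fin p, AdmOn B R U → ∃ U', AdmOn B R' U' ∧ ∀ x ∈ R, U' x = U x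

lemma extendsTo_trans {B : Set (Pat p)} {R R' R'' : Set (ℤ × ℤ)} (hsub : R ⊆ R')
    (h1 : ExtendsTo B R R') (h2 : ExtendsTo B R' R'') : ExtendsTo B R R'' := by
  intro U hU
  obtain ⟨U1, hU1, he1⟩ := h1 U hU
  obtain ⟨U2, hU2, he2⟩ := h2 U1 hU1
  exact ⟨U2, hU2, fun x hx => (he2 x (hsub hx)).trans (he1 x hx)⟩

/-! ### Translations -/

lemma blk_shift (U : ℤ × ℤ → Fin p) (t v : ℤ × ℤ) :
    blk (fun x => U (x + t)) v = blk U (v + t) := by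
  funext a b
  show U _ = U _
  congr 1
  simp [Prod.ext_iff]
  constructor <;> ring

lemma admOn_shift {B : Set (Pat p)} {R : Set (ℤ × ℤ)} {U : ℤ × ℤ → Fin p} (t : ℤ × ℤ)
    (h : AdmOn B R U) : AdmOn B ((· + t) ⁻¹' R) (fun x => U (x + t)) := by
  intro w hw
  rw [blk_shift]
  apply h
  intro x hx
  have : x - t ∈ sqr w := by
    simp only [mem_sqr] at hx ⊢
    simp only [Prod.fst_add, Prod.snd_add] at hx
    simp only [Prod.fst_sub, Prod.snd_sub]
    omega
  have := hw this
  simpa using this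

lemma extendsTo_shift {B : Set (Pat p)} {R R' : Set (ℤ × ℤ)} (t : ℤ × ℤ)
    (h : ExtendsTo B R R') : ExtendsTo B ((· + t) ⁻¹' R) ((· + t) ⁻¹' R') := by
  intro U hU
  have h1 := admOn_shift (-t) hU
  have hpre : ((· + (-t)) ⁻¹' ((· + t) ⁻¹' R)) = R := by
    ext x; simp
  rw [hpre] at h1
  obtain ⟨W, hW, he⟩ := h _ h1
  refine ⟨fun x => W (x + t), admOn_shift t hW, ?_⟩
  intro x hx
  have := he (x + t) hx
  simpa using this

lemma preimage_rect (m n : ℕ) (v t : ℤ × ℤ) :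
    (· + t) ⁻¹' rect m n v = rect m n (v - t) := by
  ext x
  simp only [Set.mem_preimage, mem_rect, Prod.fst_add, Prod.snd_add, Prod.fst_sub,
    Prod.snd_sub]
  omega

/-! ### Symmetries -/

lemma admOn_sym {g g' : ℤ × ℤ → ℤ × ℤ} {τ : Pat p → Pat p}
    (hτ : ∀ b, τ (τ b) = b)
    (hg : ∀ x, g (g x) = x)
    (hblk : ∀ (U : ℤ × ℤ → Fin p) (w : ℤ × ℤ),
      blk (fun x => U (g x)) w = τ (blk U (g' w)))
    (hsqr : ∀ x w, x ∈ sqr (g' w) ↔ g x ∈ sqr w)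
    {B : Set (Pat p)} {R : Set (ℤ × ℤ)} {U : ℤ × ℤ → Fin p}
    (h : AdmOn B R U) : AdmOn {b | τ b ∈ B} (g ⁻¹' R) (fun x => U (g x)) := by
  intro w hw
  show τ (blk (fun x => U (g x)) w) ∈ B
  rw [hblk, hτ]
  apply h
  intro x hx
  have h2 := hw ((hsqr x w).1 hx)
  rwa [Set.mem_preimage, hg] at h2

lemma glob_sym {g g' : ℤ × ℤ → ℤ × ℤ} {τ : Pat p → Pat p}
    (hblk : ∀ (U : ℤ × ℤ → Fin p) (w : ℤ × ℤ),
      blk (fun x => U (g x)) w = τ (blk U (g' w)))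
    {B : Set (Pat p)} {W : ℤ × ℤ → Fin p}
    (h : Glob {b | τ b ∈ B} W) : Glob B (fun x => W (g x)) := by
  intro v
  rw [hblk]
  exact h (g' v)

lemma crissExt_sym {g g' : ℤ × ℤ → ℤ × ℤ} {τ : Pat p → Pat p}
    (hτ : ∀ b, τ (τ b) = b)
    (hg : ∀ x, g (g x) = x)
    (hblk : ∀ (U : ℤ × ℤ → Fin p) (w : ℤ × ℤ),
      blk (fun x => U (g x)) w = τ (blk U (g' w)))
    (hsqr : ∀ x w, x ∈ sqr (g' w) ↔ g x ∈ sqr w)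
    {B : Set (Pat p)} (hZ : ∀ x, g x ∈ Zplus ↔ x ∈ Zplus)
    (h0 : g' (0, 0) = (0, 0)) (h : CrissExt B) : CrissExt {b | τ b ∈ B} := by
  intro b hb
  obtain ⟨U, hU, hb0⟩ := h (τ b) hb
  refine ⟨fun x => U (g x), ?_, ?_⟩
  · have hpre : g ⁻¹' Zplus = Zplus := by
      ext x; exact hZ x
    rw [← hpre]
    exact admOn_sym hτ hg hblk hsqr hU
  · rw [hblk, h0, hb0, hτ]

lemma cornerExt_sym {g g' : ℤ × ℤ → ℤ × ℤ} {τ : Pat p → Pat p}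
    (hτ : ∀ b, τ (τ b) = b)
    (hg : ∀ x, g (g x) = x)
    (hblk : ∀ (U : ℤ × ℤ → Fin p) (w : ℤ × ℤ),
      blk (fun x => U (g x)) w = τ (blk U (g' w)))
    (hsqr : ∀ x w, x ∈ sqr (g' w) ↔ g x ∈ sqr w)
    {B : Set (Pat p)} (i i' : Fin 4)
    (hL : ∀ x, g x ∈ Lshape i ↔ x ∈ Lshape i')
    (hR3 : ∀ x, g x ∈ rect 3 3 (0, 0) ↔ x ∈ rect 3 3 (0, 0))
    (h : CornerExt B i) : CornerExt {b | τ b ∈ B} i' := by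
  intro U hU
  have hBB : {b | τ b ∈ {b | τ b ∈ B}} = B := by
    ext b; simp [hτ b]
  have hQ := admOn_sym hτ hg hblk hsqr hU
  rw [hBB] at hQ
  have hLL : g ⁻¹' Lshape i' = Lshape i := by
    ext x
    simp only [Set.mem_preimage]
    have h2 := hL (g x)
    rw [hg] at h2
    exact h2.symm
  rw [hLL] at hQ
  obtain ⟨U'', hU'', he⟩ := h _ hQ
  refine ⟨fun x => U'' (g x), ?_, ?_⟩
  · have hpre : g ⁻¹' rect 3 3 (0, 0) = rect 3 3 (0, 0) := by
      ext x; exact hR3 x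
    have := admOn_sym hτ hg hblk hsqr hU''
    rwa [hpre] at this
  · intro x hx
    have hgx : g x ∈ Lshape i := (hL x).2 hx
    have h3 := he (g x) hgx
    show U'' (g x) = U x
    rw [h3, hg]

lemma extendsTo_sym {g g' : ℤ × ℤ → ℤ × ℤ} {τ : Pat p → Pat p}
    (hτ : ∀ b, τ (τ b) = b)
    (hg : ∀ x, g (g x) = x)
    (hblk : ∀ (U : ℤ × ℤ → Fin p) (w : ℤ × ℤ),
      blk (fun x => U (g x)) w = τ (blk U (g' w)))
    (hsqr : ∀ x w, x ∈ sqr (g' w) ↔ g x ∈ sqr w)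
    {B : Set (Pat p)} {R R' : Set (ℤ × ℤ)}
    (h : ExtendsTo B R R') :
    ExtendsTo {b | τ b ∈ B} (g ⁻¹' R) (g ⁻¹' R') := by
  intro U hU
  have hBB : {b | τ b ∈ {b | τ b ∈ B}} = B := by
    ext b; simp [hτ b]
  have h1 := admOn_sym hτ hg hblk hsqr hU
  rw [hBB] at h1
  have hpre : g ⁻¹' (g ⁻¹' R) = R := by
    ext x; simp [hg]
  rw [hpre] at h1
  obtain ⟨W, hW, he⟩ := h _ h1
  refine ⟨fun x => W (g x), admOn_sym hτ hg hblk hsqr hW, ?_⟩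
  intro x hx
  have h3 := he (g x) hx
  show W (g x) = U x
  rw [h3, hg]

end Transport

section Instances

variable {p : ℕ}

/-- transpose symmetry on patterns -/
def tS {p : ℕ} (b : Pat p) : Pat p := fun a c => b c a
/-- vertical flip on patterns -/
def tV {p : ℕ} (b : Pat p) : Pat p := fun a c => b a (1 - c)
/-- 180° rotation on patterns -/
def tR {p : ℕ} (b : Pat p) : Pat p := fun a c => b (1 - a) (1 - c)

/-- transpose map on `ℤ²` -/
def gS (x : ℤ × ℤ) : ℤ × ℤ := (x.2, x.1)
/-- vertical flip `y ↦ c - y` -/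
def gV (c : ℤ) (x : ℤ × ℤ) : ℤ × ℤ := (x.1, c - x.2)
/-- 180° rotation `(x,y) ↦ (c-x, d-y)` -/
def gR (c d : ℤ) (x : ℤ × ℤ) : ℤ × ℤ := (c - x.1, d - x.2)
/-- block-corner map for `gV` -/
def gV' (c : ℤ) (w : ℤ × ℤ) : ℤ × ℤ := (w.1, c - 1 - w.2)
/-- block-corner map for `gR` -/
def gR' (c d : ℤ) (w : ℤ × ℤ) : ℤ × ℤ := (c - 1 - w.1, d - 1 - w.2)

lemma fin2_sub_sub (d : Fin 2) : 1 - (1 - d) = d := by revert d; decide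

lemma tS_invol (b : Pat p) : tS (tS b) = b := rfl
lemma tV_invol (b : Pat p) : tV (tV b) = b := by
  funext a d
  show b a (1 - (1 - d)) = b a d
  rw [fin2_sub_sub]
lemma tR_invol (b : Pat p) : tR (tR b) = b := by
  funext a d
  show b (1 - (1 - a)) (1 - (1 - d)) = b a d
  rw [fin2_sub_sub, fin2_sub_sub]

lemma gS_invol (x : ℤ × ℤ) : gS (gS x) = x := rfl
lemma gV_invol (c : ℤ) (x : ℤ × ℤ) : gV c (gV c x) = x := by
  simp [gV]
lemma gR_invol (c d : ℤ) (x : ℤ × ℤ) : gR c d (gR c d x) = x := by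
  simp [gR]
lemma gV'_invol (c : ℤ) (x : ℤ × ℤ) : gV' c (gV' c x) = x := by
  simp [gV']
lemma gR'_invol (c d : ℤ) (x : ℤ × ℤ) : gR' c d (gR' c d x) = x := by
  simp [gR', Prod.ext_iff]

lemma fin2_cast_sub (b : Fin 2) : ((1 - b : Fin 2) : ℤ) = 1 - (b : ℤ) := by revert b; decide

lemma blk_gS (U : ℤ × ℤ → Fin p) (w : ℤ × ℤ) :
    blk (fun x => U (gS x)) w = tS (blk U (gS w)) := rfl

lemma blk_gV (c : ℤ) (U : ℤ × ℤ → Fin p) (w : ℤ × ℤ) :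
    blk (fun x => U (gV c x)) w = tV (blk U (gV' c w)) := by
  funext a b
  show U _ = U _
  congr 1
  rw [Prod.ext_iff]
  refine ⟨rfl, ?_⟩
  show c - (w.2 + (b : ℤ)) = (c - 1 - w.2) + ((1 - b : Fin 2) : ℤ)
  rw [fin2_cast_sub]
  ring

lemma blk_gR (c d : ℤ) (U : ℤ × ℤ → Fin p) (w : ℤ × ℤ) :
    blk (fun x => U (gR c d x)) w = tR (blk U (gR' c d w)) := by
  funext a b
  show U _ = U _
  congr 1
  rw [Prod.ext_iff]
  constructor
  · show c - (w.1 + (a : ℤ)) = (c - 1 - w.1) + ((1 - a : Fin 2) : ℤ)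
    rw [fin2_cast_sub]; ring
  · show d - (w.2 + (b : ℤ)) = (d - 1 - w.2) + ((1 - b : Fin 2) : ℤ)
    rw [fin2_cast_sub]; ring

lemma sqr_gS (x w : ℤ × ℤ) : x ∈ sqr (gS w) ↔ gS x ∈ sqr w := by
  simp only [mem_sqr, gS]
  omega

lemma sqr_gV (c : ℤ) (x w : ℤ × ℤ) : x ∈ sqr (gV' c w) ↔ gV c x ∈ sqr w := by
  simp only [mem_sqr, gV, gV']
  omega

lemma sqr_gR (c d : ℤ) (x w : ℤ × ℤ) : x ∈ sqr (gR' c d w) ↔ gR c d x ∈ sqr w := by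
  simp only [mem_sqr, gR, gR']
  omega

end Instances

section Core

variable {p : ℕ} {B : Set (Pat p)}

/-- rectangle plus a partial extra column on the right -/
def colReg (m n j : ℕ) : Set (ℤ × ℤ) :=
  rect m n (0, 0) ∪ rect 1 j ((m : ℤ), 0)

lemma mem_colReg {m n j : ℕ} {x : ℤ × ℤ} :
    x ∈ colReg m n j ↔ ((0 ≤ x.1 ∧ x.1 < m ∧ 0 ≤ x.2 ∧ x.2 < n) ∨
      (x.1 = m ∧ 0 ≤ x.2 ∧ x.2 < j)) := by
  simp only [colReg, Set.mem_union, mem_rect]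
  omega

lemma extColBase (hcriss : CrissExt B) {m n : ℕ} (hm : 2 ≤ m) (hn : 2 ≤ n)
    (U : ℤ × ℤ → Fin p) (hU : AdmOn B (rect m n (0, 0)) U) :
    ∃ U', AdmOn B (colReg m n 2) U' ∧ ∀ x ∈ rect m n (0, 0), U' x = U x := by
  classical
  have hb : blk U ((m : ℤ) - 2, 0) ∈ B := by
    apply hU
    intro x hx
    rw [mem_sqr] at hx
    rw [mem_rect]
    simp only at hx ⊢
    omega
  obtain ⟨V, hV, hV0⟩ := hcriss _ hb
  set t : ℤ × ℤ := (-((m : ℤ) - 2), 0) with ht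
  refine ⟨fun x => if x.1 = (m : ℤ) then V (x + t) else U x, ?_, ?_⟩
  · intro w hw
    -- corner memberships
    have c00 := hw ⟨0, 0, rfl⟩
    have c10 := hw ⟨1, 0, rfl⟩
    have c11 := hw ⟨1, 1, rfl⟩
    rw [mem_colReg] at c00 c10 c11
    simp only [Fin.isValue, Fin.val_zero, Fin.val_one, Nat.cast_zero, Nat.cast_one] at c00 c10 c11
    have hdisj : (0 ≤ w.1 ∧ w.1 + 1 < m ∧ 0 ≤ w.2 ∧ w.2 + 1 < n) ∨
        (w.1 = (m : ℤ) - 1 ∧ w.2 = 0) := by omega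
    rcases hdisj with ⟨h1, h2, h3, h4⟩ | ⟨h1, h2⟩
    · have heq : blk (fun x => if x.1 = (m : ℤ) then V (x + t) else U x) w = blk U w := by
        apply blk_congr
        intro x hx
        rw [mem_sqr] at hx
        rw [if_neg (by omega)]
      rw [heq]
      apply hU
      intro x hx
      rw [mem_sqr] at hx
      rw [mem_rect]
      simp only at hx ⊢
      omega
    · have heq : blk (fun x => if x.1 = (m : ℤ) then V (x + t) else U x) w
          = blk (fun x => V (x + t)) w := by
        apply blk_congr
        intro x hx
        rw [mem_sqr] at hx
        by_cases hx1 : x.1 = (m : ℤ)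
        · rw [if_pos hx1]
        · rw [if_neg hx1]
          -- x.1 = m - 1, x.2 ∈ {0,1} : value agrees with V via hV0
          have hx1' : x.1 = (m : ℤ) - 1 := by omega
          have hx2 : x.2 = 0 ∨ x.2 = 1 := by omega
          have key : ∀ c : Fin 2, V (1, ((c : ℕ) : ℤ)) = U ((m : ℤ) - 1, ((c : ℕ) : ℤ)) := by
            intro c
            have h5 := congrFun (congrFun hV0 1) c
            simp only [blk] at h5
            convert h5 using 2 <;> rw [Prod.ext_iff] <;> exact ⟨by simp [Fin.val_one]; try omega, by push_cast; ring⟩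
          rcases hx2 with hx2 | hx2
          · have := key 0
            simp only [Fin.val_zero, Nat.cast_zero] at this
            have hxx : x = ((m : ℤ) - 1, 0) := Prod.ext hx1' hx2
            rw [hxx]
            rw [show (((m:ℤ) - 1, (0:ℤ)) + t) = ((1 : ℤ), (0 : ℤ)) by
              rw [ht, Prod.ext_iff]; constructor <;> simp <;> ring]
            exact this.symm
          · have := key 1
            simp only [Fin.val_one, Nat.cast_one] at this
            have hxx : x = ((m : ℤ) - 1, 1) := Prod.ext hx1' hx2
            rw [hxx]
            rw [show (((m:ℤ) - 1, (1:ℤ)) + t) = ((1 : ℤ), (1 : ℤ)) by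
              rw [ht, Prod.ext_iff]; constructor <;> simp <;> ring]
            exact this.symm
      rw [heq, blk_shift]
      have hw1 : w + t = ((1 : ℤ), (0 : ℤ)) := by
        rw [ht, Prod.ext_iff]
        constructor <;> simp <;> omega
      rw [hw1]
      apply hV
      intro x hx
      rw [mem_sqr] at hx
      rw [mem_Zplus]
      simp only at hx
      omega
  · intro x hx
    rw [mem_rect] at hx
    show (if x.1 = (m : ℤ) then V (x + t) else U x) = U x
    rw [if_neg (by simp only at hx; omega)]

end Core

section CoreStep

variable {p : ℕ} {B : Set (Pat p)}

lemma admOn_mono {R' R : Set (ℤ × ℤ)} {U : ℤ × ℤ → Fin p} (hsub : R' ⊆ R)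
    (h : AdmOn B R U) : AdmOn B R' U :=
  fun v hv => h v (fun x hx => hsub (hv hx))

lemma extColStep (hC1 : CornerExt B 0) {m n j : ℕ} (hm : 2 ≤ m) (hj : 2 ≤ j)
    (hjn : j < n) (U : ℤ × ℤ → Fin p) (hU : AdmOn B (colReg m n j) U) :
    ∃ U', AdmOn B (colReg m n (j + 1)) U' ∧ ∀ x ∈ colReg m n j, U' x = U x := by
  classical
  set t : ℤ × ℤ := ((m : ℤ) - 2, (j : ℤ) - 2) with htdef
  set s : ℤ × ℤ := (-(m : ℤ) + 2, -(j : ℤ) + 2) with hsdef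
  have hP : AdmOn B (Lshape 0) (fun x => U (x + t)) := by
    apply admOn_mono _ (admOn_shift t hU)
    intro x hx
    rw [mem_Lshape0] at hx
    show x + t ∈ colReg m n j
    rw [mem_colReg]
    simp only [Prod.fst_add, Prod.snd_add, htdef]
    omega
  obtain ⟨U'', hU'', he⟩ := hC1 _ hP
  refine ⟨fun x => if x = ((m : ℤ), (j : ℤ)) then U'' (2, 2) else U x, ?_, ?_⟩
  · intro w hw
    have c00 := hw ⟨0, 0, rfl⟩
    have c10 := hw ⟨1, 0, rfl⟩
    have c01 := hw ⟨0, 1, rfl⟩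
    have c11 := hw ⟨1, 1, rfl⟩
    rw [mem_colReg] at c00 c10 c01 c11
    simp only [Fin.isValue, Fin.val_zero, Fin.val_one, Nat.cast_zero, Nat.cast_one]
      at c00 c10 c01 c11
    have hdisj : (w.1 = (m : ℤ) - 1 ∧ w.2 = (j : ℤ) - 1) ∨
        ¬(w.1 ≤ (m : ℤ) ∧ (m : ℤ) ≤ w.1 + 1 ∧ w.2 ≤ (j : ℤ) ∧ (j : ℤ) ≤ w.2 + 1) := by
      omega
    rcases hdisj with ⟨h1, h2⟩ | hneg
    · have heq : blk (fun x => if x = ((m : ℤ), (j : ℤ)) then U'' (2, 2) else U x) w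
          = blk (fun x => U'' (x + s)) w := by
        apply blk_congr
        intro x hx
        rw [mem_sqr] at hx
        by_cases hc : x = ((m : ℤ), (j : ℤ))
        · rw [if_pos hc, hc]
          congr 1
          rw [hsdef, Prod.ext_iff]
          constructor <;> simp <;> ring
        · rw [if_neg hc]
          have hy : x + s ∈ Lshape 0 := by
            rw [mem_Lshape0]
            simp only [Prod.fst_add, Prod.snd_add, hsdef]
            have hc' : ¬(x.1 = (m : ℤ) ∧ x.2 = (j : ℤ)) := by
              intro ⟨ha, hb⟩
              exact hc (Prod.ext ha hb)
            omega
          have h7 := he _ hy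
          rw [h7]
          congr 1
          rw [Prod.ext_iff]
          simp only [Prod.fst_add, Prod.snd_add, hsdef, htdef]
          constructor <;> ring
      rw [heq, blk_shift]
      have hws : w + s = ((1 : ℤ), (1 : ℤ)) := by
        rw [Prod.ext_iff]
        simp only [Prod.fst_add, Prod.snd_add, hsdef]
        omega
      rw [hws]
      apply hU''
      intro x hx
      rw [mem_sqr] at hx
      rw [mem_rect]
      simp only at hx ⊢
      omega
    · have heq : blk (fun x => if x = ((m : ℤ), (j : ℤ)) then U'' (2, 2) else U x) w
          = blk U w := by
        apply blk_congr
        intro x hx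
        rw [mem_sqr] at hx
        rw [if_neg]
        intro hc
        rw [hc] at hx
        simp only at hx
        omega
      rw [heq]
      apply hU
      intro x hx
      have h6 := hw hx
      rw [mem_sqr] at hx
      rw [mem_colReg] at h6 ⊢
      omega
  · intro x hx
    rw [mem_colReg] at hx
    show (if x = ((m : ℤ), (j : ℤ)) then U'' (2, 2) else U x) = U x
    rw [if_neg]
    intro hc
    rw [hc] at hx
    simp only at hx
    omega

end CoreStep

section ExtR

variable {p : ℕ} {B : Set (Pat p)}

lemma rect_subset_colReg {m n j : ℕ} : rect m n (0, 0) ⊆ colReg m n j := by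
  intro x hx
  rw [mem_rect] at hx
  rw [mem_colReg]
  simp only at hx
  omega

lemma extR (hcriss : CrissExt B) (hC1 : CornerExt B 0) (m n : ℕ) (hm : 2 ≤ m)
    (hn : 2 ≤ n) : ExtendsTo B (rect m n (0, 0)) (rect (m + 1) n (0, 0)) := by
  intro U hU
  have key : ∀ j, 2 ≤ j → j ≤ n →
      ∃ U', AdmOn B (colReg m n j) U' ∧ ∀ x ∈ rect m n (0, 0), U' x = U x := by
    intro j
    induction j with
    | zero => omega
    | succ k ih =>
      intro h2 hle
      rcases Nat.lt_or_ge k 2 with hk | hk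
      · have hk1 : k = 1 := by omega
        subst hk1
        exact extColBase hcriss hm hn U hU
      · obtain ⟨U1, hU1, he1⟩ := ih hk (by omega)
        obtain ⟨U2, hU2, he2⟩ := extColStep hC1 hm hk (by omega) U1 hU1
        exact ⟨U2, hU2, fun x hx =>
          (he2 x (rect_subset_colReg hx)).trans (he1 x hx)⟩
  obtain ⟨U', h1, h2⟩ := key n hn le_rfl
  have hcol : colReg m n n = rect (m + 1) n (0, 0) := by
    ext x
    rw [mem_colReg, mem_rect]
    simp only
    omega
  rw [hcol] at h1
  refine ⟨U', h1, h2⟩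

end ExtR

section Dirs

variable {p : ℕ} {B : Set (Pat p)}

lemma preimage_rect_gS (m n : ℕ) (v : ℤ × ℤ) :
    gS ⁻¹' rect m n v = rect n m (gS v) := by
  ext x
  simp only [Set.mem_preimage, mem_rect, gS]
  omega

lemma preimage_rect_gV (c : ℤ) (m n : ℕ) (v : ℤ × ℤ) :
    gV c ⁻¹' rect m n v = rect m n (v.1, c - v.2 - n + 1) := by
  ext x
  simp only [Set.mem_preimage, mem_rect, gV]
  omega

lemma preimage_rect_gR (c d : ℤ) (m n : ℕ) (v : ℤ × ℤ) :
    gR c d ⁻¹' rect m n v = rect m n (c - v.1 - m + 1, d - v.2 - n + 1) := by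
  ext x
  simp only [Set.mem_preimage, mem_rect, gR]
  omega

/-! transported hypotheses -/

lemma crissExt_gS (h : CrissExt B) : CrissExt {b | tS b ∈ B} := by
  refine crissExt_sym (g := gS) (g' := gS) tS_invol gS_invol blk_gS sqr_gS ?_ rfl h
  intro x
  rw [mem_Zplus, mem_Zplus]
  simp only [gS]
  omega

lemma cornerExt_gS_0 (h : CornerExt B 0) : CornerExt {b | tS b ∈ B} 0 := by
  refine cornerExt_sym (g := gS) (g' := gS) tS_invol gS_invol blk_gS sqr_gS 0 0 ?_ ?_ h
  · intro x
    rw [mem_Lshape0, mem_Lshape0]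
    simp only [gS]
    omega
  · intro x
    rw [mem_rect, mem_rect]
    simp only [gS]
    omega

lemma crissExt_gR (h : CrissExt B) : CrissExt {b | tR b ∈ B} := by
  refine crissExt_sym (g := gR 1 1) (g' := gR' 1 1) tR_invol (gR_invol 1 1)
    (blk_gR 1 1) (sqr_gR 1 1) ?_ ?_ h
  · intro x
    rw [mem_Zplus, mem_Zplus]
    simp only [gR]
    omega
  · simp [gR']

lemma cornerExt_gR_0 (h : CornerExt B 2) : CornerExt {b | tR b ∈ B} 0 := by
  refine cornerExt_sym (g := gR 2 2) (g' := gR' 2 2) tR_invol (gR_invol 2 2)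
    (blk_gR 2 2) (sqr_gR 2 2) 2 0 ?_ ?_ h
  · intro x
    rw [mem_Lshape2, mem_Lshape0]
    simp only [gR]
    omega
  · intro x
    rw [mem_rect, mem_rect]
    simp only [gR]
    omega

/-! the four directional extensions for a case-1 alphabet -/

lemma extT (hcriss : CrissExt B) (hC1 : CornerExt B 0) (m n : ℕ) (hm : 2 ≤ m)
    (hn : 2 ≤ n) : ExtendsTo B (rect m n (0, 0)) (rect m (n + 1) (0, 0)) := by
  have h := extR (B := {b | tS b ∈ B}) (crissExt_gS hcriss) (cornerExt_gS_0 hC1)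
    n m hn hm
  have h2 := extendsTo_sym (g := gS) (g' := gS) tS_invol gS_invol blk_gS sqr_gS h
  have hBB : {b | tS b ∈ {b | tS b ∈ B}} = B := by
    ext b; simp [tS_invol b]
  rw [hBB, preimage_rect_gS, preimage_rect_gS] at h2
  have e1 : gS ((0 : ℤ), (0 : ℤ)) = ((0 : ℤ), (0 : ℤ)) := rfl
  rw [e1] at h2
  exact h2

lemma extL (hcriss : CrissExt B) (hC3 : CornerExt B 2) (m n : ℕ) (hm : 2 ≤ m)
    (hn : 2 ≤ n) : ExtendsTo B (rect m n (1, 0)) (rect (m + 1) n (0, 0)) := by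
  have h := extR (B := {b | tR b ∈ B}) (crissExt_gR hcriss) (cornerExt_gR_0 hC3)
    m n hm hn
  have h2 := extendsTo_sym (g := gR (m : ℤ) ((n : ℤ) - 1)) (g' := gR' (m : ℤ) ((n : ℤ) - 1))
    tR_invol (gR_invol _ _) (blk_gR _ _) (sqr_gR _ _) h
  have hBB : {b | tR b ∈ {b | tR b ∈ B}} = B := by
    ext b; simp [tR_invol b]
  rw [hBB, preimage_rect_gR, preimage_rect_gR] at h2
  have e1 : rect m n ((m : ℤ) - (0:ℤ) - m + 1, ((n : ℤ) - 1) - (0:ℤ) - n + 1) = rect m n (1, 0) := by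
    norm_num
  have e2 : rect (m + 1) n ((m : ℤ) - (0:ℤ) - (m + 1 : ℕ) + 1, ((n : ℤ) - 1) - (0:ℤ) - n + 1)
      = rect (m + 1) n (0, 0) := by
    push_cast
    norm_num
  simp only at h2
  convert h2 using 2 <;> rw [Prod.ext_iff] <;> constructor <;> push_cast <;> ring

lemma extB (hcriss : CrissExt B) (hC3 : CornerExt B 2) (m n : ℕ) (hm : 2 ≤ m)
    (hn : 2 ≤ n) : ExtendsTo B (rect m n (0, 1)) (rect m (n + 1) (0, 0)) := by
  have h := extT (B := {b | tR b ∈ B}) (crissExt_gR hcriss) (cornerExt_gR_0 hC3)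
    m n hm hn
  have h2 := extendsTo_sym (g := gR ((m : ℤ) - 1) (n : ℤ)) (g' := gR' ((m : ℤ) - 1) (n : ℤ))
    tR_invol (gR_invol _ _) (blk_gR _ _) (sqr_gR _ _) h
  have hBB : {b | tR b ∈ {b | tR b ∈ B}} = B := by
    ext b; simp [tR_invol b]
  rw [hBB, preimage_rect_gR, preimage_rect_gR] at h2
  convert h2 using 2 <;> rw [Prod.ext_iff] <;> constructor <;> push_cast <;> ring

/-- one full ring of growth, at an arbitrary corner -/
lemma growAll (hcriss : CrissExt B) (hC1 : CornerExt B 0) (hC3 : CornerExt B 2)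
    (m n : ℕ) (hm : 2 ≤ m) (hn : 2 ≤ n) (v : ℤ × ℤ) :
    ExtendsTo B (rect m n v) (rect (m + 2) (n + 2) (v.1 - 1, v.2 - 1)) := by
  -- step 1 : right
  have s1 : ExtendsTo B (rect m n v) (rect (m + 1) n v) := by
    have h := extendsTo_shift (-v) (extR hcriss hC1 m n hm hn)
    rw [preimage_rect, preimage_rect] at h
    have e0 : ((0 : ℤ), (0 : ℤ)) + v = v := by ext <;> simp
    simpa [e0] using h
  -- step 2 : top
  have s2 : ExtendsTo B (rect (m + 1) n v) (rect (m + 1) (n + 1) v) := by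
    have h := extendsTo_shift (-v) (extT hcriss hC1 (m + 1) n (by omega) hn)
    rw [preimage_rect, preimage_rect] at h
    have e0 : ((0 : ℤ), (0 : ℤ)) + v = v := by ext <;> simp
    simpa [e0] using h
  -- step 3 : left
  have s3 : ExtendsTo B (rect (m + 1) (n + 1) v) (rect (m + 2) (n + 1) (v.1 - 1, v.2)) := by
    have h := extendsTo_shift ((1, 0) - v) (extL hcriss hC3 (m + 1) (n + 1) (by omega) (by omega))
    rw [preimage_rect, preimage_rect] at h
    have e1 : ((1 : ℤ), (0 : ℤ)) - ((1, 0) - v) = v := by ring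
    have e2 : ((0 : ℤ), (0 : ℤ)) - ((1, 0) - v) = (v.1 - 1, v.2) := by
      rw [Prod.ext_iff]
      constructor <;> simp
    rw [e1, e2] at h
    have e3 : m + 1 + 1 = m + 2 := by ring
    rw [e3] at h
    exact h
  -- step 4 : bottom
  have s4 : ExtendsTo B (rect (m + 2) (n + 1) (v.1 - 1, v.2))
      (rect (m + 2) (n + 2) (v.1 - 1, v.2 - 1)) := by
    have h := extendsTo_shift ((0, 1) - (v.1 - 1, v.2)) (extB hcriss hC3 (m + 2) (n + 1) (by omega) (by omega))
    rw [preimage_rect, preimage_rect] at h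
    have e1 : ((0 : ℤ), (1 : ℤ)) - ((0, 1) - ((v.1 : ℤ) - 1, v.2)) = (v.1 - 1, v.2) := by ring
    have e2 : ((0 : ℤ), (0 : ℤ)) - ((0, 1) - ((v.1 : ℤ) - 1, v.2)) = (v.1 - 1, v.2 - 1) := by
      rw [Prod.ext_iff]
      constructor <;> simp
    rw [e1, e2] at h
    have e3 : n + 1 + 1 = n + 2 := by ring
    rw [e3] at h
    exact h
  have i1 : rect m n v ⊆ rect (m + 1) n v := by
    intro x hx; rw [mem_rect] at hx ⊢; push_cast at hx ⊢; omega
  have i2 : rect (m + 1) n v ⊆ rect (m + 1) (n + 1) v := by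
    intro x hx; rw [mem_rect] at hx ⊢; push_cast at hx ⊢; omega
  have i3 : rect (m + 1) (n + 1) v ⊆ rect (m + 2) (n + 1) (v.1 - 1, v.2) := by
    intro x hx; rw [mem_rect] at hx ⊢; push_cast at hx ⊢; omega
  exact extendsTo_trans i1 s1 (extendsTo_trans i2 s2 (extendsTo_trans i3 s3 s4))

end Dirs

section Limit

variable {p : ℕ}

/-- an increasing tower of admissible extensions -/
noncomputable def tower (B : Set (Pat p)) (R : ℕ → Set (ℤ × ℤ))
    (hgrow : ∀ k (U : ℤ × ℤ → Fin p), AdmOn B (R k) U →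
      ∃ U', AdmOn B (R (k + 1)) U' ∧ ∀ x ∈ R k, U' x = U x)
    (U0 : ℤ × ℤ → Fin p) (h0 : AdmOn B (R 0) U0) :
    (k : ℕ) → {U : ℤ × ℤ → Fin p // AdmOn B (R k) U}
  | 0 => ⟨U0, h0⟩
  | (k + 1) =>
      ⟨Classical.choose (hgrow k (tower B R hgrow U0 h0 k).1 (tower B R hgrow U0 h0 k).2),
        (Classical.choose_spec
          (hgrow k (tower B R hgrow U0 h0 k).1 (tower B R hgrow U0 h0 k).2)).1⟩

lemma tower_succ (B : Set (Pat p)) (R : ℕ → Set (ℤ × ℤ))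
    (hgrow : ∀ k (U : ℤ × ℤ → Fin p), AdmOn B (R k) U →
      ∃ U', AdmOn B (R (k + 1)) U' ∧ ∀ x ∈ R k, U' x = U x)
    (U0 : ℤ × ℤ → Fin p) (h0 : AdmOn B (R 0) U0) (k : ℕ) :
    ∀ x ∈ R k, (tower B R hgrow U0 h0 (k + 1)).1 x = (tower B R hgrow U0 h0 k).1 x :=
  (Classical.choose_spec
    (hgrow k (tower B R hgrow U0 h0 k).1 (tower B R hgrow U0 h0 k).2)).2

lemma R_mono (R : ℕ → Set (ℤ × ℤ)) (hmono : ∀ k, R k ⊆ R (k + 1)) :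
    ∀ j k, j ≤ k → R j ⊆ R k := by
  intro j k hjk
  induction k with
  | zero => rw [Nat.le_zero] at hjk; subst hjk; exact le_rfl
  | succ k ih =>
    rcases Nat.eq_or_lt_of_le hjk with h | h
    · subst h; exact le_rfl
    · exact (ih (by omega)).trans (hmono k)

lemma tower_agree (B : Set (Pat p)) (R : ℕ → Set (ℤ × ℤ))
    (hgrow : ∀ k (U : ℤ × ℤ → Fin p), AdmOn B (R k) U →
      ∃ U', AdmOn B (R (k + 1)) U' ∧ ∀ x ∈ R k, U' x = U x)
    (U0 : ℤ × ℤ → Fin p) (h0 : AdmOn B (R 0) U0)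
    (hmono : ∀ k, R k ⊆ R (k + 1)) :
    ∀ j k, j ≤ k → ∀ x ∈ R j,
      (tower B R hgrow U0 h0 k).1 x = (tower B R hgrow U0 h0 j).1 x := by
  intro j k hjk
  induction k with
  | zero =>
    rw [Nat.le_zero] at hjk; subst hjk
    intro x _; rfl
  | succ k ih =>
    rcases Nat.eq_or_lt_of_le hjk with h | h
    · subst h; intro x _; rfl
    · intro x hx
      have hxk : x ∈ R k := R_mono R hmono j k (by omega) hx
      rw [tower_succ B R hgrow U0 h0 k x hxk]
      exact ih (by omega) x hx

end Limit

section Main1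

variable {p : ℕ} {B : Set (Pat p)}

lemma main1 (hcriss : CrissExt B) (hC1 : CornerExt B 0) (hC3 : CornerExt B 2) :
    RectExt B := by
  intro m n hm hn U hU
  set R : ℕ → Set (ℤ × ℤ) :=
    fun k => rect (m + 2 * k) (n + 2 * k) (-(k : ℤ), -(k : ℤ)) with hR
  have hR0 : R 0 = rect m n (0, 0) := by
    simp [hR]
  have h0 : AdmOn B (R 0) U := by rw [hR0]; exact hU
  have hgrow : ∀ k (U' : ℤ × ℤ → Fin p), AdmOn B (R k) U' →
      ∃ U'', AdmOn B (R (k + 1)) U'' ∧ ∀ x ∈ R k, U'' x = U' x := by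
    intro k U' hU'
    obtain ⟨U'', h1, h2⟩ := growAll hcriss hC1 hC3 (m + 2 * k) (n + 2 * k)
      (by omega) (by omega) (-(k : ℤ), -(k : ℤ)) U' hU'
    refine ⟨U'', ?_, h2⟩
    have e : R (k + 1) = rect (m + 2 * k + 2) (n + 2 * k + 2)
        ((-(k : ℤ), -(k : ℤ)).1 - 1, (-(k : ℤ), -(k : ℤ)).2 - 1) := by
      ext x
      simp only [hR, mem_rect]
      push_cast
      omega
    rw [e]
    exact h1
  have hmono : ∀ k, R k ⊆ R (k + 1) := by
    intro k x hx
    simp only [hR, mem_rect] at hx ⊢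
    push_cast at hx ⊢
    omega
  set T := tower B R hgrow U h0 with hT
  have hagree := tower_agree B R hgrow U h0 hmono
  set W : ℤ × ℤ → Fin p := fun x => (T (x.1.natAbs + x.2.natAbs)).1 x with hW
  have hmem : ∀ (x : ℤ × ℤ) (k : ℕ), x.1.natAbs + x.2.natAbs ≤ k → x ∈ R k := by
    intro x k hk
    simp only [hR, mem_rect]
    omega
  have hWk : ∀ (x : ℤ × ℤ) (k : ℕ), x.1.natAbs + x.2.natAbs ≤ k → W x = (T k).1 x := by
    intro x k hk
    rw [hW]
    exact (hagree _ k hk x (hmem x _ le_rfl)).symm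
  refine ⟨W, ?_, ?_⟩
  · intro v
    set K := v.1.natAbs + v.2.natAbs + 2 with hK
    have hblkeq : blk W v = blk (T K).1 v := by
      apply blk_congr
      intro x hx
      rw [mem_sqr] at hx
      exact hWk x K (by rw [hK]; omega)
    rw [hblkeq]
    apply (T K).2
    intro x hx
    rw [mem_sqr] at hx
    simp only [hR, mem_rect]
    omega
  · intro x hx
    have h0x : x ∈ R 0 := by rw [hR0]; exact hx
    have := hagree 0 (x.1.natAbs + x.2.natAbs) (Nat.zero_le _) x h0x
    show (tower B R hgrow U h0 (x.1.natAbs + x.2.natAbs)).1 x = U x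
    exact this.trans rfl

end Main1

section Final

variable {p : ℕ} {B : Set (Pat p)}

lemma crissExt_gV (h : CrissExt B) : CrissExt {b | tV b ∈ B} := by
  refine crissExt_sym (g := gV 1) (g' := gV' 1) tV_invol (gV_invol 1)
    (blk_gV 1) (sqr_gV 1) ?_ ?_ h
  · intro x
    rw [mem_Zplus, mem_Zplus]
    simp only [gV]
    omega
  · simp [gV']

lemma cornerExt_gV_0 (h : CornerExt B 3) : CornerExt {b | tV b ∈ B} 0 := by
  refine cornerExt_sym (g := gV 2) (g' := gV' 2) tV_invol (gV_invol 2)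
    (blk_gV 2) (sqr_gV 2) 3 0 ?_ ?_ h
  · intro x
    rw [mem_Lshape3, mem_Lshape0]
    simp only [gV]
    omega
  · intro x
    rw [mem_rect, mem_rect]
    simp only [gV]
    omega

lemma cornerExt_gV_2 (h : CornerExt B 1) : CornerExt {b | tV b ∈ B} 2 := by
  refine cornerExt_sym (g := gV 2) (g' := gV' 2) tV_invol (gV_invol 2)
    (blk_gV 2) (sqr_gV 2) 1 2 ?_ ?_ h
  · intro x
    rw [mem_Lshape1, mem_Lshape2]
    simp only [gV]
    omega
  · intro x
    rw [mem_rect, mem_rect]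
    simp only [gV]
    omega

lemma rectExt_of_gV (h : RectExt {b | tV b ∈ B}) : RectExt B := by
  intro m n hm hn U hU
  have hA := admOn_sym (g := gV ((n : ℤ) - 1)) (g' := gV' ((n : ℤ) - 1)) (B := B)
    tV_invol (gV_invol _) (blk_gV _) (sqr_gV _) hU
  rw [preimage_rect_gV] at hA
  have e : (((0 : ℤ), (0 : ℤ)).1, (n : ℤ) - 1 - ((0 : ℤ), (0 : ℤ)).2 - (n : ℕ) + 1)
      = ((0 : ℤ), (0 : ℤ)) := by
    rw [Prod.ext_iff]
    constructor <;> push_cast <;> ring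
  rw [e] at hA
  obtain ⟨Wg, hG, he⟩ := h m n hm hn _ hA
  refine ⟨fun x => Wg (gV ((n : ℤ) - 1) x), glob_sym (blk_gV _) hG, ?_⟩
  intro x hx
  have hgx : gV ((n : ℤ) - 1) x ∈ rect m n (0, 0) := by
    rw [mem_rect] at hx ⊢
    simp only [gV] at *
    omega
  have h3 := he _ hgx
  show Wg (gV ((n : ℤ) - 1) x) = U x
  rw [h3]
  show U (gV _ (gV _ x)) = U x
  rw [gV_invol]

lemma rectExt_to_crissExt (h : RectExt B) : CrissExt B := by
  intro b hb
  classical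
  set U0 : ℤ × ℤ → Fin p :=
    fun x => b (if x.1 = 0 then 0 else 1) (if x.2 = 0 then 0 else 1) with hU0
  have hblk0 : blk U0 ((0 : ℤ), (0 : ℤ)) = b := by
    funext a c
    show U0 ((0 : ℤ) + (a : ℕ), (0 : ℤ) + (c : ℕ)) = b a c
    rw [hU0]
    fin_cases a <;> fin_cases c <;> norm_num
  have hadm : AdmOn B (rect 2 2 (0, 0)) U0 := by
    intro w hw
    have c00 := hw ⟨0, 0, rfl⟩
    have c11 := hw ⟨1, 1, rfl⟩
    rw [mem_rect] at c00 c11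
    simp only [Fin.isValue, Fin.val_zero, Fin.val_one, Nat.cast_zero, Nat.cast_one]
      at c00 c11
    have hw0 : w = ((0 : ℤ), (0 : ℤ)) := by
      rw [Prod.ext_iff]
      constructor <;> omega
    rw [hw0, hblk0]
    exact hb
  obtain ⟨W, hW, he⟩ := h 2 2 le_rfl le_rfl U0 hadm
  refine ⟨W, fun v _ => hW v, ?_⟩
  rw [← hblk0]
  apply blk_congr
  intro x hx
  apply he
  rw [mem_sqr] at hx
  rw [mem_rect]
  simp only at hx ⊢
  omega

end Final

/-- If `B` satisfies `C(1)` and `C(3)`, or `C(2)` and `C(4)`, then `B` is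
rectangle-extendable if and only if `B` is crisscross-extendable. -/
theorem rectExt_iff_crissExt {p : ℕ} (hp : 2 ≤ p) (B : Set (Pat p))
    (hC : (CornerExt B 0 ∧ CornerExt B 2) ∨ (CornerExt B 1 ∧ CornerExt B 3)) :
    RectExt B ↔ CrissExt B := by
  constructor
  · exact fun h => rectExt_to_crissExt h
  · intro hcriss
    rcases hC with ⟨h1, h3⟩ | ⟨h2, h4⟩
    · exact main1 hcriss h1 h3
    · exact rectExt_of_gV
        (main1 (crissExt_gV hcriss) (cornerExt_gV_0 h4) (cornerExt_gV_2 h2))
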